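/- Let W > 0, let σ, κ : ℝ → ℝ be continuous on [0,W], and let a, b, E ∈ ℝ. Suppose (φe, φl) is a solution of the 1D coupled porous-electrode system on [0,W] satisfying the zero-flux conditions σ(W)·φe'(W) = 0 and κ(0)·φl'(0) = 0. Then the remaining boundary fluxes are determined by charge conservation: σ(0)·φe'(0) = κ(W)·φl'(W) = −∫₀^W a·sinh(b·(φe(x) − φl(x) − E)) dx. In particular, if the Dirichlet substitution method prescribes κ(W)·φl'(W) = j for some j ∈ ℝ, then the implicit flux at x = 0 equals the original galvanostatic Neumann value: σ(0)·φe'(0) = j. -/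

import Mathlib

open Set

noncomputable section

/-- `(φe, φl)` is a solution of the 1D coupled porous-electrode system on `[0, W]`. -/
def IsSolution1D (W : ℝ) (σ κ : ℝ → ℝ) (a b E : ℝ) (φe φl : ℝ → ℝ) : Prop :=
  ContDiffOn ℝ 1 φe (Icc 0 W) ∧ ContDiffOn ℝ 1 φl (Icc 0 W) ∧
  ContDiffOn ℝ 1 (fun x => σ x * deriv φe x) (Icc 0 W) ∧
  ContDiffOn ℝ 1 (fun x => κ x * deriv φl x) (Icc 0 W) ∧
  (∀ x ∈ Icc 0 W, deriv (fun y => σ y * deriv φe y) x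
      = a * Real.sinh (b * (φe x - φl x - E))) ∧
  (∀ x ∈ Icc 0 W, deriv (fun y => κ y * deriv φl y) x
      = -(a * Real.sinh (b * (φe x - φl x - E))))

lemma ftc_aux (W : ℝ) (hW : 0 < W) (g F : ℝ → ℝ)
    (hg : ContDiffOn ℝ 1 g (Icc 0 W))
    (hd : ∀ x ∈ Icc 0 W, deriv g x = F x)
    (hF : ContinuousOn F (Icc 0 W)) :
    ∫ x in (0:ℝ)..W, F x = g W - g 0 := by
  have hInt : IntervalIntegrable F MeasureTheory.volume 0 W := by
    apply hF.intervalIntegrable_of_Icc hW.le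
  apply intervalIntegral.integral_eq_sub_of_hasDeriv_right_of_le hW.le
  · exact hg.continuousOn
  · intro x hx
    have hdiff : DifferentiableAt ℝ g x :=
      ((hg.differentiableOn one_ne_zero) x ⟨hx.1.le, hx.2.le⟩).differentiableAt
        (Icc_mem_nhds hx.1 hx.2)
    have := hdiff.hasDerivAt
    rw [hd x ⟨hx.1.le, hx.2.le⟩] at this
    exact this.hasDerivWithinAt
  · exact hInt

theorem charge_conservation_fluxes
    (W : ℝ) (hW : 0 < W) (σ κ : ℝ → ℝ)
    (hσc : ContinuousOn σ (Icc 0 W)) (hκc : ContinuousOn κ (Icc 0 W))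
    (a b E : ℝ) (φe φl : ℝ → ℝ)
    (h : IsSolution1D W σ κ a b E φe φl)
    (hfluxW : σ W * deriv φe W = 0) (hflux0 : κ 0 * deriv φl 0 = 0) :
    σ 0 * deriv φe 0 = κ W * deriv φl W ∧
    σ 0 * deriv φe 0 = -∫ x in (0:ℝ)..W, a * Real.sinh (b * (φe x - φl x - E)) ∧
    (∀ j : ℝ, κ W * deriv φl W = j → σ 0 * deriv φe 0 = j) := by
  obtain ⟨he, hl, hse, hkl, heq, hleq⟩ := h
  have hFc : ContinuousOn (fun x => a * Real.sinh (b * (φe x - φl x - E))) (Icc 0 W) := by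
    apply ContinuousOn.mul continuousOn_const
    exact Real.continuous_sinh.comp_continuousOn
      (continuousOn_const.mul ((he.continuousOn.sub hl.continuousOn).sub continuousOn_const))
  have h1 : ∫ x in (0:ℝ)..W, a * Real.sinh (b * (φe x - φl x - E))
      = σ W * deriv φe W - σ 0 * deriv φe 0 :=
    ftc_aux W hW _ _ hse heq hFc
  have h2 : ∫ x in (0:ℝ)..W, -(a * Real.sinh (b * (φe x - φl x - E)))
      = κ W * deriv φl W - κ 0 * deriv φl 0 :=
    ftc_aux W hW _ _ hkl hleq hFc.neg
  rw [intervalIntegral.integral_neg, h1] at h2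
  rw [hfluxW, hflux0] at *
  constructor
  · linarith
  constructor
  · rw [h1]; ring
  · intro j hj; linarith
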